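/- For every k ≥ 2 and N ≥ 0, the de Bruijn graph B_{k,N} is isomorphic, as an oriented graph (forgetting labels), to the graph Γ_{k,N} of the action of the lamplighter group L_k on the N-th level of the k-regular rooted tree with respect to the generating set {c̄_r = cʳb : 0 ≤ r ≤ k−1}. An explicit isomorphism can be built by induction via line graphs. In particular, B_{k,N} is a Schreier graph of L_k. -/

import Mathlib

/-- An oriented (multi)graph: vertices, edges, initial and terminal maps. -/
structure OGraph where
  V : Type
  E : Type
  ι : E → V
  τ : E → V

namespace OGraph

/-- Isomorphism of oriented graphs. -/
structure Iso (G H : OGraph) where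
  fV : G.V ≃ H.V
  fE : G.E ≃ H.E
  hι : ∀ e, H.ι (fE e) = fV (G.ι e)
  hτ : ∀ e, H.τ (fE e) = fV (G.τ e)

/-- The line graph of an oriented graph. -/
def line (G : OGraph) : OGraph where
  V := G.E
  E := {p : G.E × G.E // G.τ p.1 = G.ι p.2}
  ι p := p.1.1
  τ p := p.1.2

end OGraph

/-- The de Bruijn graph `B_{k,N}`: vertices are words `x₁…x_N` over `{0,…,k−1}`
(realized as `ZMod k`), and for each symbol `y` there is one edge from `x₁…x_N`
to `x₂…x_N y`. -/
def deBruijn (k N : ℕ) : OGraph where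
  V := Fin N → ZMod k
  E := (Fin N → ZMod k) × ZMod k
  ι e := e.1
  τ e := fun j => if h : (j : ℕ) + 1 < N then e.1 ⟨(j : ℕ) + 1, h⟩ else e.2

/-- The graph `Γ_{k,N}` of the action of the lamplighter group `L_k = ℤ/kℤ ≀ ℤ` on the
`N`-th level of the `k`-regular rooted tree, with respect to the generators
`c̄_r = cʳb` (`0 ≤ r ≤ k−1`, realized as `r : ZMod k`): for each vertex `x = x₁…x_N`
and each `r` there is one edge from `x` to
`c̄_r · x = (x₁+r)(x₂+x₁)…(x_N+x_{N−1})` (mod `k`). -/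
def gammaGraph (k N : ℕ) : OGraph where
  V := Fin N → ZMod k
  E := (Fin N → ZMod k) × ZMod k
  ι e := e.1
  τ e := fun j => if (j : ℕ) = 0 then e.1 j + e.2
    else e.1 j + e.1 ⟨(j : ℕ) - 1, Nat.lt_of_le_of_lt (Nat.sub_le _ _) j.2⟩


open Finset

def gammaGraph' (k N : ℕ) (e : (Fin N → ZMod k) × ZMod k) : Fin N → ZMod k :=
  fun j => if (j : ℕ) = 0 then e.1 j + e.2
    else e.1 j + e.1 ⟨(j : ℕ) - 1, Nat.lt_of_le_of_lt (Nat.sub_le _ _) j.2⟩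

def psi (k N : ℕ) (u : Fin N → ZMod k) : Fin N → ZMod k :=
  fun j => ∑ i : Fin N, ((j : ℕ).choose (N - 1 - (i : ℕ)) : ZMod k) * u i

def extd (k N : ℕ) (u : Fin N → ZMod k) : ℕ → ZMod k :=
  fun n => if h : n < N then u ⟨n, h⟩ else 0

lemma psi_eq (k N : ℕ) (u : Fin N → ZMod k) (j : Fin N) :
    psi k N u j = ∑ i ∈ range N, (((j : ℕ).choose (N - 1 - i) : ZMod k) * extd k N u i) := by
  rw [← Fin.sum_univ_eq_sum_range (fun i => ((j : ℕ).choose (N - 1 - i) : ZMod k) * extd k N u i)]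
  apply Finset.sum_congr rfl
  intro i _
  simp only [extd, dif_pos i.2]

lemma psi_shift (k N : ℕ) (u : Fin N → ZMod k) (r : ZMod k) (j : ℕ) (hj : j + 1 < N) :
    psi k N (gammaGraph' k N (u, r)) ⟨j, by omega⟩ = psi k N u ⟨j + 1, hj⟩ := by
  obtain ⟨M, rfl⟩ : ∃ M, N = M + 2 := ⟨N - 2, by omega⟩
  have hjM : j < M + 1 := by omega
  rw [psi_eq, psi_eq]
  simp only [Fin.val_mk]
  set x : ℕ → ZMod k := extd k (M + 2) u with hx
  set x' : ℕ → ZMod k := extd k (M + 2) (gammaGraph' k (M + 2) (u, r)) with hx'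
  have hx'0 : x' 0 = x 0 + r := by
    simp [hx', hx, extd, gammaGraph']
  have hx's : ∀ n, n + 1 < M + 2 → x' (n + 1) = x (n + 1) + x n := by
    intro n hn
    simp only [hx', hx, extd, dif_pos hn, dif_pos (by omega : n < M + 2), gammaGraph']
    simp
  -- abbreviations
  have hA : ∀ (y : ℕ → ZMod k) (c : ℕ → ℕ),
      ∑ i ∈ range (M + 1), (c (M + 1 - i) : ZMod k) * y i
      = (∑ i ∈ range M, (c (M - i) : ZMod k) * y (i + 1)) + (c (M + 1) : ZMod k) * y 0 := by
    intro y c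
    rw [Finset.sum_range_succ']
    congr 1
    apply Finset.sum_congr rfl; intro i hi
    have : M + 1 - (i + 1) = M - i := by omega
    rw [this]
  -- peel last terms
  conv_lhs => rw [Finset.sum_range_succ]
  conv_rhs => rw [Finset.sum_range_succ]
  have e1 : M + 2 - 1 - (M + 1) = 0 := by omega
  rw [e1]
  have e2 : ∀ i ∈ range (M + 1), (((j : ℕ).choose (M + 2 - 1 - i) : ZMod k) * x' i)
      = ((j : ℕ).choose (M + 1 - i) : ZMod k) * x' i := by
    intro i hi
    have : M + 2 - 1 - i = M + 1 - i := by omega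
    rw [this]
  have e3 : ∀ i ∈ range (M + 1), (((j + 1 : ℕ).choose (M + 2 - 1 - i) : ZMod k) * x i)
      = (((j : ℕ).choose (M - i) : ZMod k) + ((j : ℕ).choose (M + 1 - i) : ZMod k)) * x i := by
    intro i hi
    have h1 : M + 2 - 1 - i = (M - i) + 1 := by
      simp only [mem_range] at hi; omega
    have h2 : M - i + 1 = M + 1 - i := by
      simp only [mem_range] at hi; omega
    rw [h1, Nat.choose_succ_succ, Nat.succ_eq_add_one, h2]
    push_cast
    ring
  rw [Finset.sum_congr rfl e2, Finset.sum_congr rfl e3]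
  have lhs1 : ∑ i ∈ range (M + 1), ((j : ℕ).choose (M + 1 - i) : ZMod k) * x' i
      = (∑ i ∈ range M, ((j : ℕ).choose (M - i) : ZMod k) * (x (i + 1) + x i)) := by
    rw [hA x' (fun s => (j : ℕ).choose s), Nat.choose_eq_zero_of_lt (by omega : j < M + 1)]
    push_cast
    rw [zero_mul, add_zero]
    apply Finset.sum_congr rfl; intro i hi
    rw [hx's i (by simp only [mem_range] at hi; omega)]
  rw [lhs1]
  have rhs1 : ∑ i ∈ range (M + 1),
      (((j : ℕ).choose (M - i) : ZMod k) + ((j : ℕ).choose (M + 1 - i) : ZMod k)) * x i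
      = (∑ i ∈ range (M + 1), ((j : ℕ).choose (M - i) : ZMod k) * x i)
        + ∑ i ∈ range (M + 1), ((j : ℕ).choose (M + 1 - i) : ZMod k) * x i := by
    rw [← Finset.sum_add_distrib]
    apply Finset.sum_congr rfl; intro i _; ring
  rw [rhs1, hA x (fun s => (j : ℕ).choose s),
    Nat.choose_eq_zero_of_lt (by omega : j < M + 1)]
  push_cast
  rw [Finset.sum_range_succ, Nat.sub_self, Nat.choose_zero_right]
  have hlast : x' (M + 1) = x (M + 1) + x M := hx's M (by omega)
  rw [hlast]
  push_cast
  simp only [mul_add]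
  rw [Finset.sum_add_distrib, Nat.choose_zero_right]
  push_cast
  ring

open Finset
lemma psi_injective (k N : ℕ) : Function.Injective (psi k N) := by
  intro u v h
  suffices H : ∀ m, ∀ i : Fin N, N - 1 - (i : ℕ) = m → u i = v i by
    funext i; exact H _ i rfl
  intro m
  induction m using Nat.strong_induction_on with
  | _ m ih =>
    intro i hi
    have hiN := i.2
    have hmN : m < N := by omega
    have hj := congrFun h ⟨m, hmN⟩
    simp only [psi] at hj
    have key : ∑ b : Fin N, ((m.choose (N - 1 - (b : ℕ)) : ZMod k) * (u b - v b)) = 0 := by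
      have h0 : ∑ b : Fin N, ((m.choose (N - 1 - (b : ℕ)) : ZMod k) * u b)
          - ∑ b : Fin N, ((m.choose (N - 1 - (b : ℕ)) : ZMod k) * v b) = 0 := by
        rw [hj]; ring
      rw [← Finset.sum_sub_distrib] at h0
      simpa [mul_sub] using h0
    rw [Finset.sum_eq_single i] at key
    · rw [hi, Nat.choose_self, Nat.cast_one, one_mul, sub_eq_zero] at key
      exact key
    · intro b _ hb
      have hbi : (b : ℕ) ≠ (i : ℕ) := fun hh => hb (Fin.ext hh)
      have hbN := b.2
      rcases lt_or_gt_of_ne hbi with hlt | hgt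
      · have : m < N - 1 - (b : ℕ) := by omega
        rw [Nat.choose_eq_zero_of_lt this]; simp
      · have hb' : N - 1 - (b : ℕ) < m := by omega
        rw [ih _ hb' b rfl]; simp
    · intro hmem; exact absurd (Finset.mem_univ i) hmem

lemma gammaGraph_tau (k N : ℕ) (e : (Fin N → ZMod k) × ZMod k) :
    (gammaGraph k N).τ e = gammaGraph' k N e := rfl

lemma psi_last_sub (k N : ℕ) (hN : 0 < N) (u : Fin N → ZMod k) (r r' : ZMod k) :
    psi k N (gammaGraph' k N (u, r)) ⟨N - 1, by omega⟩
      - psi k N (gammaGraph' k N (u, r')) ⟨N - 1, by omega⟩ = r - r' := by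
  simp only [psi]
  rw [← Finset.sum_sub_distrib]
  have key : ∀ b : Fin N,
      ((N - 1 : ℕ).choose (N - 1 - (b : ℕ)) : ZMod k) * gammaGraph' k N (u, r) b
        - ((N - 1 : ℕ).choose (N - 1 - (b : ℕ)) : ZMod k) * gammaGraph' k N (u, r') b
      = if (b : ℕ) = 0 then r - r' else 0 := by
    intro b
    by_cases hb : (b : ℕ) = 0
    · simp only [gammaGraph', hb, if_true, if_pos]
      simp only [Nat.sub_zero, Nat.choose_self, Nat.cast_one]
      ring
    · simp only [gammaGraph', if_neg hb]
      ring_nf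
  rw [Finset.sum_congr rfl (fun b _ => key b)]
  rw [Finset.sum_eq_single (⟨0, hN⟩ : Fin N)]
  · simp
  · intro b _ hb
    rw [if_neg (fun h => hb (Fin.ext (by simpa using h)))]
  · intro h; exact absurd (Finset.mem_univ _) h

/-- For every `k ≥ 2` and `N ≥ 0`, the de Bruijn graph `B_{k,N}` is
isomorphic, as an oriented graph, to the graph `Γ_{k,N}` of the action of the
lamplighter group `L_k` on the `N`-th level of the `k`-regular rooted tree with respect
to the generators `c̄_r = cʳb`; in particular `B_{k,N}` is a Schreier graph of `L_k`. -/
theorem deBruijn_iso_gammaGraph (k N : ℕ) (hk : 2 ≤ k) :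
    Nonempty (OGraph.Iso (deBruijn k N) (gammaGraph k N)) := by
  haveI : NeZero k := ⟨by omega⟩
  have hbij : Function.Bijective (psi k N) :=
    Finite.injective_iff_bijective.mp (psi_injective k N)
  let eF : (Fin N → ZMod k) × ZMod k → (Fin N → ZMod k) × ZMod k :=
    fun e => (psi k N e.1,
      if h : 0 < N then psi k N (gammaGraph' k N e) ⟨N - 1, by omega⟩ else e.2)
  have heinj : Function.Injective eF := by
    intro e e' h
    have h1 : psi k N e.1 = psi k N e'.1 := congrArg Prod.fst h
    have h1' : e.1 = e'.1 := psi_injective k N h1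
    have h2 := congrArg Prod.snd h
    by_cases hN : 0 < N
    · simp only [eF, dif_pos hN] at h2
      have hsub := psi_last_sub k N hN e.1 e.2 e'.2
      have he : e = (e.1, e.2) := rfl
      have he' : e' = (e'.1, e'.2) := rfl
      rw [he, he', h1']
      have h3 : e.2 - e'.2 = 0 := by
        rw [← hsub]
        rw [he, he'] at h2
        rw [h1'] at h2 ⊢
        rw [h2]
        ring
      have h4 : e.2 = e'.2 := by linear_combination h3
      rw [h4]
    · simp only [eF, dif_neg hN] at h2
      exact Prod.ext h1' h2
  have hebij : Function.Bijective eF := Finite.injective_iff_bijective.mp heinj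
  refine ⟨?_⟩
  have I : OGraph.Iso (gammaGraph k N) (deBruijn k N) := by
    refine ⟨Equiv.ofBijective (psi k N) hbij, Equiv.ofBijective eF hebij, fun e => rfl, ?_⟩
    intro e
    funext j
    have hN : 0 < N := j.pos
    show (if h : (j : ℕ) + 1 < N then (eF e).1 ⟨(j : ℕ) + 1, h⟩ else (eF e).2)
      = psi k N ((gammaGraph k N).τ e) j
    by_cases hj : (j : ℕ) + 1 < N
    · rw [dif_pos hj]
      show psi k N e.1 ⟨(j : ℕ) + 1, hj⟩ = _
      have hsh := psi_shift k N e.1 e.2 (j : ℕ) hj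
      show _ = psi k N (gammaGraph' k N e) j
      have he : e = (e.1, e.2) := rfl
      rw [he, ← hsh]
    · rw [dif_neg hj]
      show (if h : 0 < N then psi k N (gammaGraph' k N e) ⟨N - 1, by omega⟩ else e.2) = _
      rw [dif_pos hN]
      show _ = psi k N (gammaGraph' k N e) j
      congr 1
      have hje : (j : ℕ) = N - 1 := by have := j.2; omega
      exact Fin.ext (by simp [hje])
  exact ⟨I.fV.symm, I.fE.symm, fun e => by
      apply I.fV.injective
      rw [Equiv.apply_symm_apply, ← I.hι, Equiv.apply_symm_apply],
    fun e => by
      apply I.fV.injective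
      rw [Equiv.apply_symm_apply, ← I.hτ, Equiv.apply_symm_apply]⟩
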